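/- arXiv:1209.4375 — 2 statements merged into one kernel-verified Lean document; each statement's English description precedes it below -/
import Mathlib

section
/- Let E be a finite connected directed graph, K a field, and z ∈ Z(KE) with Peirce decomposition z = Σ_{u ∈ E^0} z_u, where z_u = zu ∈ uAu. If u and v are connected vertices, then z_u ∈ Ku if and only if z_v ∈ Kv. Consequently, for any central element z either z_u ∈ Ku for all vertices u, or z_u ∉ Ku for all vertices u. -/
/-! Basic infrastructure: directed graphs and their path algebras.

The path algebra `KE` is realized as the non-unital subalgebra generated by the
(images of the) vertices and edges inside the unital algebra `PA K E`, which is the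
quotient of the free algebra on vertices and edges by the usual path-algebra
relations (vertices are orthogonal idempotents acting as local units on edges).
Words of composable edges are exactly the paths, so `KE` has the paths as a basis. -/

/-- A directed graph `E = (E⁰, E¹, s, r)`. -/
structure DirGraph : Type 1 where
  V : Type
  Edge : Type
  s : Edge → V
  r : Edge → V

/-- A (non-unital, possibly non-closed) subset `S` of an algebra is *prime* if it is nonzero
and `a S b = 0` implies `a = 0` or `b = 0` for `a, b ∈ S`. -/
def IsPrimeSet {A : Type} [NonUnitalNonAssocSemiring A] (S : Set A) : Prop :=
  (∃ a ∈ S, a ≠ 0) ∧ ∀ a ∈ S, ∀ b ∈ S, (∀ x ∈ S, a * x * b = 0) → a = 0 ∨ b = 0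

/-- `J` is a two-sided ideal of the (possibly non-unital) subalgebra with carrier `S`. -/
def IsIdealOf (K : Type) [Field K] {A : Type} [Ring A] [Algebra K A] (S J : Set A) : Prop :=
  J ⊆ S ∧ (0 : A) ∈ J ∧ (∀ x ∈ J, ∀ y ∈ J, x + y ∈ J) ∧
    (∀ k : K, ∀ x ∈ J, k • x ∈ J) ∧ (∀ a ∈ S, ∀ x ∈ J, a * x ∈ J ∧ x * a ∈ J)

namespace DirGraph

/-- Generators of the path algebra: vertices and edges. -/
abbrev Gen (E : DirGraph) : Type := E.V ⊕ E.Edge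

variable (K : Type) [Field K] (E : DirGraph)

/-- The defining relations of the path algebra: vertices are orthogonal idempotents,
`s(e)·e = e`, `e·r(e) = e`, and all other vertex-edge products vanish. -/
inductive PathRel : FreeAlgebra K E.Gen → FreeAlgebra K E.Gen → Prop
  | vv_eq (u : E.V) :
      PathRel (FreeAlgebra.ι K (Sum.inl u) * FreeAlgebra.ι K (Sum.inl u))
        (FreeAlgebra.ι K (Sum.inl u))
  | vv_ne (u v : E.V) : u ≠ v →
      PathRel (FreeAlgebra.ι K (Sum.inl u) * FreeAlgebra.ι K (Sum.inl v)) 0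
  | ve_eq (e : E.Edge) :
      PathRel (FreeAlgebra.ι K (Sum.inl (E.s e)) * FreeAlgebra.ι K (Sum.inr e))
        (FreeAlgebra.ι K (Sum.inr e))
  | ve_ne (u : E.V) (e : E.Edge) : E.s e ≠ u →
      PathRel (FreeAlgebra.ι K (Sum.inl u) * FreeAlgebra.ι K (Sum.inr e)) 0
  | ev_eq (e : E.Edge) :
      PathRel (FreeAlgebra.ι K (Sum.inr e) * FreeAlgebra.ι K (Sum.inl (E.r e)))
        (FreeAlgebra.ι K (Sum.inr e))
  | ev_ne (e : E.Edge) (u : E.V) : E.r e ≠ u →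
      PathRel (FreeAlgebra.ι K (Sum.inr e) * FreeAlgebra.ι K (Sum.inl u)) 0

/-- The ambient unital algebra (the unitalization of the path algebra). -/
abbrev PA : Type := RingQuot (E.PathRel K)

/-- The image of a vertex in the path algebra. -/
noncomputable def vtx (u : E.V) : E.PA K :=
  RingQuot.mkAlgHom K (E.PathRel K) (FreeAlgebra.ι K (Sum.inl u))

/-- The image of an edge in the path algebra. -/
noncomputable def edg (e : E.Edge) : E.PA K :=
  RingQuot.mkAlgHom K (E.PathRel K) (FreeAlgebra.ι K (Sum.inr e))

/-- The path algebra `KE`: the (non-unital) subalgebra spanned by all paths, i.e.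
generated by the vertices and edges. -/
noncomputable def KE : NonUnitalSubalgebra K (E.PA K) :=
  NonUnitalAlgebra.adjoin K (Set.range (E.vtx K) ∪ Set.range (E.edg K))

/-- The center `Z(KE)` of the path algebra. -/
def relCenter : Set (E.PA K) :=
  {z | z ∈ E.KE K ∧ ∀ a ∈ E.KE K, a * z = z * a}

/-- `E.IsPathFrom u v l` : the list of edges `l` is a path from `u` to `v`
(`l = []` is the trivial path at `u = v`). -/
def IsPathFrom : E.V → E.V → List E.Edge → Prop
  | u, v, [] => u = v
  | u, v, e :: l => E.s e = u ∧ IsPathFrom (E.r e) v l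

/-- The element of the path algebra corresponding to the path starting at `u`
with list of edges `l` (for `l = []` this is the vertex `u` itself). -/
noncomputable def pathElem (u : E.V) (l : List E.Edge) : E.PA K :=
  E.vtx K u * (l.map (E.edg K)).prod

/-- The sum of all vertices: the unit of `KE` when `E⁰` is finite. -/
noncomputable def unitKE : E.PA K := ∑ᶠ u : E.V, E.vtx K u

/-- The scalar multiples `K·1` of the unit of `KE`. -/
noncomputable def scalarSet : Set (E.PA K) := Set.range fun k : K => k • E.unitKE K

/-- One step in the underlying undirected graph. -/
def Step (u v : E.V) : Prop :=
  (∃ e : E.Edge, E.s e = u ∧ E.r e = v) ∨ (∃ e : E.Edge, E.s e = v ∧ E.r e = u)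

/-- `u ∼ v` : the vertices `u` and `v` are connected in the underlying undirected graph. -/
def Connected (u v : E.V) : Prop := Relation.ReflTransGen E.Step u v

/-- The graph `E` is connected. -/
def IsConnectedGraph : Prop := ∀ u v : E.V, E.Connected u v

/-- The graph `E` is a cycle: `n ≥ 1` vertices `u₁, …, uₙ` and `n` edges `f₁, …, fₙ` with
`s(fᵢ) = uᵢ`, `r(fᵢ) = uᵢ₊₁` (indices mod `n`). -/
def IsCycleGraph : Prop :=
  ∃ n : ℕ, ∃ hn : 0 < n, ∃ (hv : Fin n ≃ E.V) (he : Fin n ≃ E.Edge),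
    ∀ i : Fin n, E.s (he i) = hv i ∧ E.r (he i) = hv ⟨(i.1 + 1) % n, Nat.mod_lt _ hn⟩

end DirGraph

noncomputable section Stmt3Aux
attribute [local instance] Classical.propDecidable

namespace DirGraph

variable {K : Type} [Field K] {E : DirGraph}

/-- Target vertex of a list of edges starting at `u`. -/
def tgt (E : DirGraph) : E.V → List E.Edge → E.V
  | u, [] => u
  | _, e :: l => tgt E (E.r e) l

/-- Composability of a list of edges starting at `u`. -/
def Ok (E : DirGraph) : E.V → List E.Edge → Prop
  | _, [] => True
  | u, e :: l => E.s e = u ∧ Ok E (E.r e) l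

@[simp] lemma tgt_nil (u : E.V) : E.tgt u [] = u := rfl
@[simp] lemma tgt_cons (u : E.V) (e : E.Edge) (l : List E.Edge) :
    E.tgt u (e :: l) = E.tgt (E.r e) l := rfl
@[simp] lemma ok_nil (u : E.V) : E.Ok u [] := trivial
lemma ok_cons {u : E.V} {e : E.Edge} {l : List E.Edge} :
    E.Ok u (e :: l) ↔ E.s e = u ∧ E.Ok (E.r e) l := Iff.rfl

lemma tgt_append (u : E.V) (l m : List E.Edge) :
    E.tgt u (l ++ m) = E.tgt (E.tgt u l) m := by
  induction l generalizing u with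
  | nil => rfl
  | cons e l ih => simp [ih]

lemma ok_append {u : E.V} {l m : List E.Edge} (hl : E.Ok u l)
    (hm : E.Ok (E.tgt u l) m) : E.Ok u (l ++ m) := by
  induction l generalizing u with
  | nil => simpa using hm
  | cons e l ih =>
    exact ok_cons.mpr ⟨(ok_cons.mp hl).1, ih (ok_cons.mp hl).2 hm⟩

lemma ok_dropLast {u : E.V} {l : List E.Edge} (hl : E.Ok u l) :
    E.Ok u l.dropLast := by
  induction l generalizing u with
  | nil => simp
  | cons e l ih =>
    cases l with
    | nil => simp
    | cons f m =>
      exact ok_cons.mpr ⟨(ok_cons.mp hl).1, ih (ok_cons.mp hl).2⟩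

/-- The type of (finite directed) paths in `E`. -/
abbrev Pth (E : DirGraph) : Type := {p : E.V × List E.Edge // E.Ok p.1 p.2}

/-- The free module on the set of paths. -/
abbrev Mod (E : DirGraph) (K : Type) [Field K] : Type := Pth E →₀ K

/-- Lift a map on basis elements to an endomorphism of `Mod`. -/
def lift0 (b : Pth E → E.Mod K) : Module.End K (E.Mod K) :=
  Finsupp.lsum K fun p => LinearMap.toSpanSingleton K _ (b p)

@[simp] lemma lift0_single (b : Pth E → E.Mod K) (p : Pth E) (k : K) :
    lift0 b (Finsupp.single p k) = k • b p := by
  simp [lift0]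

end DirGraph
namespace DirGraph

variable {K : Type} [Field K] {E : DirGraph}

variable (K) in
/-- Projection onto paths starting at `u`. -/
def projS (u : E.V) : Module.End K (E.Mod K) :=
  lift0 fun p => if p.1.1 = u then Finsupp.single p 1 else 0

variable (K) in
/-- Projection onto paths ending at `u`. -/
def projT (u : E.V) : Module.End K (E.Mod K) :=
  lift0 fun p => if E.tgt p.1.1 p.1.2 = u then Finsupp.single p 1 else 0

variable (K) in
/-- Prepend the edge `e` to paths starting at `r e`. -/
def consE (e : E.Edge) : Module.End K (E.Mod K) :=
  lift0 fun p => if h : p.1.1 = E.r e then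
    Finsupp.single ⟨(E.s e, e :: p.1.2), ok_cons.mpr ⟨rfl, h ▸ p.2⟩⟩ 1 else 0

variable (K) in
/-- Append the edge `e` to paths ending at `s e`. -/
def snocE (e : E.Edge) : Module.End K (E.Mod K) :=
  lift0 fun p => if h : E.tgt p.1.1 p.1.2 = E.s e then
    Finsupp.single ⟨(p.1.1, p.1.2 ++ [e]), ok_append p.2 (ok_cons.mpr ⟨h.symm, trivial⟩)⟩ 1
    else 0

variable (K) in
/-- Remove a leading edge `e`. -/
def unconsE (e : E.Edge) : Module.End K (E.Mod K) :=
  lift0 fun p =>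
    match p with
    | ⟨(_, []), _⟩ => 0
    | ⟨(_, e' :: l), h⟩ =>
      if he : e' = e then Finsupp.single ⟨(E.r e, l), he ▸ (ok_cons.mp h).2⟩ 1 else 0

variable (K) in
/-- Remove a trailing edge `e`. -/
def unsnocE (e : E.Edge) : Module.End K (E.Mod K) :=
  lift0 fun p => if p.1.2.getLast? = some e then
    Finsupp.single ⟨(p.1.1, p.1.2.dropLast), ok_dropLast p.2⟩ 1 else 0

lemma unconsE_mul_consE (e : E.Edge) :
    unconsE K e * consE K e = projS K (E.r e) := by
  apply Finsupp.lhom_ext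
  intro p k
  rcases p with ⟨⟨x, l⟩, hp⟩
  simp only [Module.End.mul_apply, consE, projS, lift0_single]
  by_cases h : x = E.r e
  · subst h
    rw [dif_pos rfl, if_pos rfl, map_smul]
    simp [unconsE]
  · rw [dif_neg h, if_neg h]
    simp

lemma unsnocE_mul_snocE (e : E.Edge) :
    unsnocE K e * snocE K e = projT K (E.s e) := by
  apply Finsupp.lhom_ext
  intro p k
  rcases p with ⟨⟨x, l⟩, hp⟩
  simp only [Module.End.mul_apply, snocE, projT, lift0_single]
  by_cases h : E.tgt x l = E.s e
  · rw [dif_pos h, if_pos h, map_smul]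
    simp [unsnocE, List.dropLast_concat]
  · rw [dif_neg h, if_neg h]
    simp

end DirGraph
namespace DirGraph

variable {K : Type} [Field K] {E : DirGraph}

lemma projS_mul_self (u : E.V) : projS K (E := E) u * projS K u = projS K u := by
  apply Finsupp.lhom_ext; intro p k
  simp only [Module.End.mul_apply, projS, lift0_single]
  by_cases h : p.1.1 = u
  · rw [if_pos h, map_smul, lift0_single, if_pos h, smul_smul, mul_one]
  · rw [if_neg h]; simp

lemma projS_mul_ne {u v : E.V} (h : u ≠ v) :
    projS K (E := E) u * projS K v = 0 := by
  apply Finsupp.lhom_ext; intro p k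
  simp only [Module.End.mul_apply, projS, lift0_single, LinearMap.zero_apply]
  by_cases hv : p.1.1 = v
  · rw [if_pos hv, map_smul, lift0_single, if_neg (by rw [hv]; exact fun hh => h hh.symm)]
    simp
  · rw [if_neg hv]; simp

lemma projS_mul_consE (e : E.Edge) :
    projS K (E := E) (E.s e) * consE K e = consE K e := by
  apply Finsupp.lhom_ext; intro p k
  simp only [Module.End.mul_apply, consE, projS, lift0_single]
  by_cases h : p.1.1 = E.r e
  · rw [dif_pos h, map_smul, lift0_single, if_pos rfl, smul_smul, mul_one]
  · rw [dif_neg h]; simp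

lemma projS_mul_consE_ne {u : E.V} {e : E.Edge} (h : E.s e ≠ u) :
    projS K (E := E) u * consE K e = 0 := by
  apply Finsupp.lhom_ext; intro p k
  simp only [Module.End.mul_apply, consE, projS, lift0_single, LinearMap.zero_apply]
  by_cases hc : p.1.1 = E.r e
  · rw [dif_pos hc, map_smul, lift0_single, if_neg h]; simp
  · rw [dif_neg hc]; simp

lemma consE_mul_projS (e : E.Edge) :
    consE K (E := E) e * projS K (E.r e) = consE K e := by
  apply Finsupp.lhom_ext; intro p k
  simp only [Module.End.mul_apply, consE, projS, lift0_single]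
  by_cases h : p.1.1 = E.r e
  · rw [if_pos h, map_smul, lift0_single, dif_pos h, smul_smul, mul_one]
  · rw [if_neg h, dif_neg h]; simp

lemma consE_mul_projS_ne {u : E.V} {e : E.Edge} (h : E.r e ≠ u) :
    consE K (E := E) e * projS K u = 0 := by
  apply Finsupp.lhom_ext; intro p k
  simp only [Module.End.mul_apply, consE, projS, lift0_single, LinearMap.zero_apply]
  by_cases hu : p.1.1 = u
  · rw [if_pos hu, map_smul, lift0_single, dif_neg (by rw [hu]; exact fun hh => h hh.symm)]
    simp
  · rw [if_neg hu]; simp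

lemma projT_mul_self (u : E.V) : projT K (E := E) u * projT K u = projT K u := by
  apply Finsupp.lhom_ext; intro p k
  simp only [Module.End.mul_apply, projT, lift0_single]
  by_cases h : E.tgt p.1.1 p.1.2 = u
  · rw [if_pos h, map_smul, lift0_single, if_pos h, smul_smul, mul_one]
  · rw [if_neg h]; simp

lemma projT_mul_ne {u v : E.V} (h : u ≠ v) :
    projT K (E := E) v * projT K u = 0 := by
  apply Finsupp.lhom_ext; intro p k
  simp only [Module.End.mul_apply, projT, lift0_single, LinearMap.zero_apply]
  by_cases hu : E.tgt p.1.1 p.1.2 = u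
  · rw [if_pos hu, map_smul, lift0_single, if_neg (fun hh => h (hu.symm.trans hh))]
    simp
  · rw [if_neg hu]; simp

lemma snocE_mul_projT (e : E.Edge) :
    snocE K (E := E) e * projT K (E.s e) = snocE K e := by
  apply Finsupp.lhom_ext; intro p k
  simp only [Module.End.mul_apply, snocE, projT, lift0_single]
  by_cases h : E.tgt p.1.1 p.1.2 = E.s e
  · rw [if_pos h, map_smul, lift0_single, dif_pos h, smul_smul, mul_one]
  · rw [if_neg h, dif_neg h]; simp

lemma snocE_mul_projT_ne {u : E.V} {e : E.Edge} (h : E.s e ≠ u) :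
    snocE K (E := E) e * projT K u = 0 := by
  apply Finsupp.lhom_ext; intro p k
  simp only [Module.End.mul_apply, snocE, projT, lift0_single, LinearMap.zero_apply]
  by_cases hu : E.tgt p.1.1 p.1.2 = u
  · rw [if_pos hu, map_smul, lift0_single,
      dif_neg (by rw [hu]; exact fun hh => h hh.symm)]
    simp
  · rw [if_neg hu]; simp

lemma projT_mul_snocE (e : E.Edge) :
    projT K (E := E) (E.r e) * snocE K e = snocE K e := by
  apply Finsupp.lhom_ext; intro p k
  simp only [Module.End.mul_apply, snocE, projT, lift0_single]
  by_cases h : E.tgt p.1.1 p.1.2 = E.s e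
  · rw [dif_pos h, map_smul, lift0_single,
      if_pos (by simp [tgt_append])]
    rw [smul_smul, mul_one]
  · rw [dif_neg h]; simp

lemma projT_mul_snocE_ne {u : E.V} {e : E.Edge} (h : E.r e ≠ u) :
    projT K (E := E) u * snocE K e = 0 := by
  apply Finsupp.lhom_ext; intro p k
  simp only [Module.End.mul_apply, snocE, projT, lift0_single, LinearMap.zero_apply]
  by_cases hc : E.tgt p.1.1 p.1.2 = E.s e
  · rw [dif_pos hc, map_smul, lift0_single, if_neg (by simp [tgt_append, h])]
    simp
  · rw [dif_neg hc]; simp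

end DirGraph
namespace DirGraph

variable {K : Type} [Field K] {E : DirGraph}

variable (K E) in
/-- Generators for the left regular representation. -/
def genL : E.Gen → Module.End K (E.Mod K) :=
  Sum.elim (fun u => projS K u) (fun e => consE K e)

variable (K E) in
/-- Generators for the right regular representation. -/
def genR : E.Gen → (Module.End K (E.Mod K))ᵐᵒᵖ :=
  Sum.elim (fun u => MulOpposite.op (projT K u)) (fun e => MulOpposite.op (snocE K e))

variable (K E) in
lemma relL : ∀ ⦃x y⦄, E.PathRel K x y →
    FreeAlgebra.lift K (genL K E) x = FreeAlgebra.lift K (genL K E) y := by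
  intro x y h
  induction h with
  | vv_eq u => simp [genL, projS_mul_self]
  | vv_ne u v h => simp [genL, projS_mul_ne h]
  | ve_eq e => simp [genL, projS_mul_consE]
  | ve_ne u e h => simp [genL, projS_mul_consE_ne h]
  | ev_eq e => simp [genL, consE_mul_projS]
  | ev_ne e u h => simp [genL, consE_mul_projS_ne h]

variable (K E) in
lemma relR : ∀ ⦃x y⦄, E.PathRel K x y →
    FreeAlgebra.lift K (genR K E) x = FreeAlgebra.lift K (genR K E) y := by
  intro x y h
  induction h with
  | vv_eq u =>
    simp only [map_mul, FreeAlgebra.lift_ι_apply, genL, genR, Sum.elim_inl,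
      ← MulOpposite.op_mul]
    rw [projT_mul_self]
  | vv_ne u v h =>
    simp only [map_mul, map_zero, FreeAlgebra.lift_ι_apply, genR, Sum.elim_inl,
      ← MulOpposite.op_mul]
    rw [projT_mul_ne h, MulOpposite.op_zero]
  | ve_eq e =>
    simp only [map_mul, FreeAlgebra.lift_ι_apply, genR, Sum.elim_inl, Sum.elim_inr,
      ← MulOpposite.op_mul]
    rw [snocE_mul_projT]
  | ve_ne u e h =>
    simp only [map_mul, map_zero, FreeAlgebra.lift_ι_apply, genR, Sum.elim_inl, Sum.elim_inr,
      ← MulOpposite.op_mul]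
    rw [snocE_mul_projT_ne h, MulOpposite.op_zero]
  | ev_eq e =>
    simp only [map_mul, FreeAlgebra.lift_ι_apply, genR, Sum.elim_inl, Sum.elim_inr,
      ← MulOpposite.op_mul]
    rw [projT_mul_snocE]
  | ev_ne e u h =>
    simp only [map_mul, map_zero, FreeAlgebra.lift_ι_apply, genR, Sum.elim_inl, Sum.elim_inr,
      ← MulOpposite.op_mul]
    rw [projT_mul_snocE_ne h, MulOpposite.op_zero]

variable (K E) in
/-- The left regular representation of the path algebra. -/
def repL : E.PA K →ₐ[K] Module.End K (E.Mod K) :=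
  RingQuot.liftAlgHom K ⟨FreeAlgebra.lift K (genL K E), relL K E⟩

variable (K E) in
/-- The right regular representation of the path algebra. -/
def repR : E.PA K →ₐ[K] (Module.End K (E.Mod K))ᵐᵒᵖ :=
  RingQuot.liftAlgHom K ⟨FreeAlgebra.lift K (genR K E), relR K E⟩

@[simp] lemma repL_vtx (u : E.V) : repL K E (E.vtx K u) = projS K u := by
  rw [vtx, repL, RingQuot.liftAlgHom_mkAlgHom_apply]
  simp [genL]

@[simp] lemma repL_edg (e : E.Edge) : repL K E (E.edg K e) = consE K e := by
  rw [edg, repL, RingQuot.liftAlgHom_mkAlgHom_apply]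
  simp [genL]

@[simp] lemma repR_vtx (u : E.V) :
    repR K E (E.vtx K u) = MulOpposite.op (projT K u) := by
  rw [vtx, repR, RingQuot.liftAlgHom_mkAlgHom_apply]
  simp [genR]

@[simp] lemma repR_edg (e : E.Edge) :
    repR K E (E.edg K e) = MulOpposite.op (snocE K e) := by
  rw [edg, repR, RingQuot.liftAlgHom_mkAlgHom_apply]
  simp [genR]

end DirGraph
namespace DirGraph

variable {K : Type} [Field K] {E : DirGraph}

lemma vtx_mul_vtx_self (u : E.V) : E.vtx K u * E.vtx K u = E.vtx K u := by
  simpa [vtx, map_mul] using RingQuot.mkAlgHom_rel K (PathRel.vv_eq (K := K) (E := E) u)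

lemma vtx_mul_vtx_ne {u v : E.V} (h : u ≠ v) : E.vtx K u * E.vtx K v = 0 := by
  simpa [vtx, map_mul] using RingQuot.mkAlgHom_rel K (PathRel.vv_ne (K := K) (E := E) u v h)

lemma vtx_mul_edg_self (e : E.Edge) : E.vtx K (E.s e) * E.edg K e = E.edg K e := by
  simpa [vtx, edg, map_mul] using RingQuot.mkAlgHom_rel K (PathRel.ve_eq (K := K) (E := E) e)

lemma vtx_mul_edg_ne {u : E.V} {e : E.Edge} (h : E.s e ≠ u) :
    E.vtx K u * E.edg K e = 0 := by
  simpa [vtx, edg, map_mul] using RingQuot.mkAlgHom_rel K (PathRel.ve_ne (K := K) (E := E) u e h)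

lemma edg_mul_vtx_self (e : E.Edge) : E.edg K e * E.vtx K (E.r e) = E.edg K e := by
  simpa [vtx, edg, map_mul] using RingQuot.mkAlgHom_rel K (PathRel.ev_eq (K := K) (E := E) e)

lemma edg_mul_vtx_ne {u : E.V} {e : E.Edge} (h : E.r e ≠ u) :
    E.edg K e * E.vtx K u = 0 := by
  simpa [vtx, edg, map_mul] using RingQuot.mkAlgHom_rel K (PathRel.ev_ne (K := K) (E := E) e u h)

lemma pathElem_nil (u : E.V) : E.pathElem K u [] = E.vtx K u := by
  simp [pathElem]

lemma pathElem_cons {u : E.V} (e : E.Edge) (l : List E.Edge) (h : E.s e = u) :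
    E.pathElem K u (e :: l) = E.edg K e * E.pathElem K (E.r e) l := by
  have h1 : E.vtx K u * E.edg K e = E.edg K e := by rw [← h]; exact vtx_mul_edg_self e
  calc E.pathElem K u (e :: l)
      = E.vtx K u * (E.edg K e * (l.map (E.edg K)).prod) := by
        simp [pathElem, List.map_cons, List.prod_cons]
    _ = (E.vtx K u * E.edg K e) * (l.map (E.edg K)).prod := by rw [mul_assoc]
    _ = ((E.edg K e * E.vtx K (E.r e))) * (l.map (E.edg K)).prod := by
        rw [h1, edg_mul_vtx_self]
    _ = E.edg K e * E.pathElem K (E.r e) l := by rw [mul_assoc]; simp only [pathElem]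

lemma vtx_mul_pathElem (x u : E.V) (l : List E.Edge) :
    E.vtx K x * E.pathElem K u l = if x = u then E.pathElem K u l else 0 := by
  simp only [pathElem]
  rw [← mul_assoc]
  by_cases h : x = u
  · rw [if_pos h, h, vtx_mul_vtx_self]
  · rw [if_neg h, vtx_mul_vtx_ne h, zero_mul]

lemma pathElem_mul {u : E.V} {l : List E.Edge} (hl : E.Ok u l) (x : E.V)
    (m : List E.Edge) :
    E.pathElem K u l * E.pathElem K x m =
      if E.tgt u l = x then E.pathElem K u (l ++ m) else 0 := by
  induction l generalizing u with
  | nil =>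
    rw [pathElem_nil, vtx_mul_pathElem]
    simp only [tgt_nil, List.nil_append]
    by_cases h : u = x
    · rw [if_pos h]; simp [h]
    · rw [if_neg h]; simp [h]
  | cons e l ih =>
    obtain ⟨he, hl'⟩ := ok_cons.mp hl
    rw [pathElem_cons e l he, mul_assoc, ih hl', tgt_cons, List.cons_append,
      pathElem_cons e (l ++ m) he]
    by_cases h : E.tgt (E.r e) l = x
    · rw [if_pos h, if_pos h]
    · rw [if_neg h, if_neg h, mul_zero]

variable (K E) in
/-- The path basis elements of `KE`, indexed by paths. -/
def pelem : Pth E → E.PA K := fun p => E.pathElem K p.1.1 p.1.2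

lemma edg_eq_pelem (e : E.Edge) :
    E.edg K e = pelem K E ⟨(E.s e, [e]), ok_cons.mpr ⟨rfl, trivial⟩⟩ := by
  rw [pelem]
  simp only [pathElem, List.map_cons, List.map_nil, List.prod_cons, List.prod_nil, mul_one]
  exact (vtx_mul_edg_self e).symm

lemma KE_le_span {w : E.PA K} (hw : w ∈ E.KE K) :
    w ∈ Submodule.span K (Set.range (pelem K E)) := by
  induction hw using NonUnitalAlgebra.adjoin_induction with
  | mem x hx =>
    apply Submodule.subset_span
    rcases hx with ⟨u, rfl⟩ | ⟨e, rfl⟩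
    · exact ⟨⟨(u, []), trivial⟩, by simp only [pelem]; exact pathElem_nil u⟩
    · exact ⟨_, (edg_eq_pelem e).symm⟩
  | add x y hx hy ihx ihy => exact add_mem ihx ihy
  | zero => exact zero_mem _
  | mul x y hx hy ihx ihy =>
    clear hx hy
    induction ihx using Submodule.span_induction with
    | mem a ha =>
      induction ihy using Submodule.span_induction with
      | mem b hb =>
        obtain ⟨p, rfl⟩ := ha
        obtain ⟨q, rfl⟩ := hb
        rw [pelem, pelem, pathElem_mul p.2]
        by_cases h : E.tgt p.1.1 p.1.2 = q.1.1
        · rw [if_pos h]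
          exact Submodule.subset_span
            ⟨⟨(p.1.1, p.1.2 ++ q.1.2), ok_append p.2 (h ▸ q.2)⟩, rfl⟩
        · rw [if_neg h]; exact zero_mem _
      | zero => rw [mul_zero]; exact zero_mem _
      | add b c _ _ ihb ihc => rw [mul_add]; exact add_mem ihb ihc
      | smul k b _ ihb => rw [mul_smul_comm]; exact Submodule.smul_mem _ _ ihb
    | zero => rw [zero_mul]; exact zero_mem _
    | add a b _ _ iha ihb => rw [add_mul]; exact add_mem iha ihb
    | smul k a _ iha => rw [smul_mul_assoc]; exact Submodule.smul_mem _ _ iha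
  | smul k x hx ihx => exact Submodule.smul_mem _ _ ihx

end DirGraph
namespace DirGraph

variable {K : Type} [Field K] {E : DirGraph}

lemma repL_pathElem {u : E.V} {l : List E.Edge} (hl : E.Ok u l) (q : Pth E) (k : K) :
    repL K E (E.pathElem K u l) (Finsupp.single q k) =
      if h : E.tgt u l = q.1.1 then
        Finsupp.single ⟨(u, l ++ q.1.2), ok_append hl (h ▸ q.2)⟩ k else 0 := by
  induction l generalizing u with
  | nil =>
    rw [pathElem_nil, repL_vtx]
    simp only [projS, lift0_single, tgt_nil]
    by_cases h : q.1.1 = u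
    · simp only [if_pos h, dif_pos h.symm, Finsupp.smul_single, smul_eq_mul, mul_one]
      subst h
      exact (dif_pos (t := fun _ => Finsupp.single q k) rfl).symm
    · simp only [if_neg h, smul_zero]
      exact (dif_neg (e := fun _ => (0 : E.Pth →₀ K)) (fun hh : u = q.1.1 => h hh.symm)).symm
  | cons e l ih =>
    obtain ⟨he, hl'⟩ := ok_cons.mp hl
    rw [pathElem_cons e l he, map_mul, Module.End.mul_apply, ih hl']
    by_cases h : E.tgt (E.r e) l = q.1.1
    · rw [dif_pos h, repL_edg]
      simp only [consE, lift0_single]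
      rw [dif_pos trivial, Finsupp.smul_single, smul_eq_mul, mul_one,
        dif_pos (show E.tgt u (e :: l) = q.1.1 from h)]
      congr 1
      exact Subtype.ext (by simp [he])
    · rw [dif_neg h, map_zero, dif_neg (show ¬E.tgt u (e :: l) = q.1.1 from h)]

lemma repR_pathElem {u : E.V} {l : List E.Edge} (hl : E.Ok u l) (q : Pth E) (k : K) :
    (MulOpposite.unop (repR K E (E.pathElem K u l))) (Finsupp.single q k) =
      if h : u = E.tgt q.1.1 q.1.2 then
        Finsupp.single ⟨(q.1.1, q.1.2 ++ l), ok_append q.2 (h ▸ hl)⟩ k else 0 := by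
  induction l generalizing u q k with
  | nil =>
    rw [pathElem_nil, repR_vtx, MulOpposite.unop_op]
    simp only [projT, lift0_single]
    by_cases h : E.tgt q.1.1 q.1.2 = u
    · rw [if_pos h, dif_pos h.symm, Finsupp.smul_single, smul_eq_mul, mul_one]
      subst h
      congr 1
      exact Subtype.ext (by simp)
    · rw [if_neg h, dif_neg (fun hh => h hh.symm), smul_zero]
  | cons e l ih =>
    obtain ⟨he, hl'⟩ := ok_cons.mp hl
    rw [pathElem_cons e l he, map_mul, MulOpposite.unop_mul, Module.End.mul_apply,
      repR_edg, MulOpposite.unop_op]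
    simp only [snocE, lift0_single]
    by_cases h : E.tgt q.1.1 q.1.2 = E.s e
    · rw [dif_pos h, Finsupp.smul_single, smul_eq_mul, mul_one, ih hl',
        dif_pos (show E.r e = E.tgt q.1.1 (q.1.2 ++ [e]) by rw [tgt_append]; rfl),
        dif_pos (show u = E.tgt q.1.1 q.1.2 from (h.trans he).symm)]
      congr 1
      exact Subtype.ext (by simp)
    · rw [dif_neg h, smul_zero, map_zero,
        dif_neg (show ¬u = E.tgt q.1.1 q.1.2 from fun hh => h (hh.symm.trans he.symm))]

/-- The trivial path at a vertex. -/
def trivP (x : E.V) : Pth E := ⟨(x, []), trivial⟩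

lemma recoveryL [Fintype E.V] {w : E.PA K}
    (hw : w ∈ Submodule.span K (Set.range (pelem K E))) :
    ∑ x : E.V, Finsupp.linearCombination K (pelem K E)
      (repL K E w (Finsupp.single (trivP x) 1)) = w := by
  induction hw using Submodule.span_induction with
  | mem a ha =>
    obtain ⟨p, rfl⟩ := ha
    have key : ∀ x : E.V, repL K E (pelem K E p) (Finsupp.single (trivP x) 1) =
        if E.tgt p.1.1 p.1.2 = x then Finsupp.single p 1 else 0 := by
      intro x
      rw [pelem, repL_pathElem p.2]
      by_cases h : E.tgt p.1.1 p.1.2 = x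
      · rw [dif_pos (show E.tgt p.1.1 p.1.2 = (trivP x).1.1 from h), if_pos h]
        congr 1
        exact Subtype.ext (by simp [trivP])
      · rw [dif_neg (show ¬E.tgt p.1.1 p.1.2 = (trivP x).1.1 from h), if_neg h]
    simp only [key, apply_ite (Finsupp.linearCombination K (pelem K E)), map_zero,
      Finsupp.linearCombination_single, one_smul]
    rw [Finset.sum_ite_eq]
    simp
  | zero => simp
  | add x y _ _ ihx ihy =>
    simp only [map_add, LinearMap.add_apply, Finset.sum_add_distrib, ihx, ihy]
  | smul k x _ ihx =>
    simp only [map_smul, LinearMap.smul_apply, ← Finset.smul_sum, ihx]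

lemma recoveryR [Fintype E.V] {w : E.PA K}
    (hw : w ∈ Submodule.span K (Set.range (pelem K E))) :
    ∑ x : E.V, Finsupp.linearCombination K (pelem K E)
      ((MulOpposite.unop (repR K E w)) (Finsupp.single (trivP x) 1)) = w := by
  induction hw using Submodule.span_induction with
  | mem a ha =>
    obtain ⟨p, rfl⟩ := ha
    have key : ∀ x : E.V,
        (MulOpposite.unop (repR K E (pelem K E p))) (Finsupp.single (trivP x) 1) =
        if p.1.1 = x then Finsupp.single p 1 else 0 := by
      intro x
      rw [pelem, repR_pathElem p.2]
      by_cases h : p.1.1 = x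
      · rw [dif_pos (show p.1.1 = E.tgt (trivP x (E := E)).1.1 (trivP x (E := E)).1.2 from h),
          if_pos h]
        congr 1
        exact Subtype.ext (by simp [trivP, ← h])
      · rw [dif_neg
          (show ¬p.1.1 = E.tgt (trivP x (E := E)).1.1 (trivP x (E := E)).1.2 from h),
          if_neg h]
    simp only [key, apply_ite (Finsupp.linearCombination K (pelem K E)), map_zero,
      Finsupp.linearCombination_single, one_smul]
    rw [Finset.sum_ite_eq]
    simp
  | zero => simp
  | add x y _ _ ihx ihy =>
    simp only [map_add, MulOpposite.unop_add, LinearMap.add_apply,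
      Finset.sum_add_distrib, ihx, ihy]
  | smul k x _ ihx =>
    simp only [map_smul, MulOpposite.unop_smul, LinearMap.smul_apply,
      ← Finset.smul_sum, ihx]

end DirGraph
namespace DirGraph

variable {K : Type} [Field K] {E : DirGraph}

lemma vtx_mem_KE (u : E.V) : E.vtx K u ∈ E.KE K :=
  NonUnitalAlgebra.subset_adjoin K (Or.inl ⟨u, rfl⟩)

lemma edg_mem_KE (e : E.Edge) : E.edg K e ∈ E.KE K :=
  NonUnitalAlgebra.subset_adjoin K (Or.inr ⟨e, rfl⟩)

lemma cancel_left [Finite E.V] (e : E.Edge) {w : E.PA K} (hw : w ∈ E.KE K)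
    (h1 : E.vtx K (E.r e) * w = w) (h2 : E.edg K e * w = 0) : w = 0 := by
  have : Fintype E.V := Fintype.ofFinite E.V
  rw [← recoveryL (KE_le_span hw)]
  apply Finset.sum_eq_zero
  intro x _
  suffices hz : repL K E w (Finsupp.single (trivP x) 1) = 0 by rw [hz, map_zero]
  set m := repL K E w (Finsupp.single (trivP x) 1) with hm
  have hc : consE K e m = 0 := by
    have h2' := congrArg (repL K E) h2
    rw [map_mul, map_zero, repL_edg] at h2'
    have := LinearMap.congr_fun h2' (Finsupp.single (trivP x) 1)
    simpa [Module.End.mul_apply] using this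
  have hp : projS K (E.r e) m = m := by
    have h1' := congrArg (repL K E) h1
    rw [map_mul, repL_vtx] at h1'
    have := LinearMap.congr_fun h1' (Finsupp.single (trivP x) 1)
    simpa [Module.End.mul_apply] using this
  calc m = projS K (E.r e) m := hp.symm
    _ = (unconsE K e * consE K e) m := by rw [unconsE_mul_consE]
    _ = unconsE K e (consE K e m) := by rw [Module.End.mul_apply]
    _ = 0 := by rw [hc, map_zero]

lemma cancel_right [Finite E.V] (e : E.Edge) {w : E.PA K} (hw : w ∈ E.KE K)
    (h1 : w * E.vtx K (E.s e) = w) (h2 : w * E.edg K e = 0) : w = 0 := by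
  have : Fintype E.V := Fintype.ofFinite E.V
  set W := MulOpposite.unop (repR K E w) with hWdef
  have hc : snocE K e * W = 0 := by
    have h2' := congrArg (repR K E) h2
    rw [map_mul, map_zero, repR_edg] at h2'
    have := congrArg MulOpposite.unop h2'
    simpa [MulOpposite.unop_mul] using this
  have hp : projT K (E.s e) * W = W := by
    have h1' := congrArg (repR K E) h1
    rw [map_mul, repR_vtx] at h1'
    have := congrArg MulOpposite.unop h1'
    simpa [MulOpposite.unop_mul] using this
  have hW : W = 0 := by
    calc W = projT K (E.s e) * W := hp.symm
      _ = (unsnocE K e * snocE K e) * W := by rw [unsnocE_mul_snocE]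
      _ = unsnocE K e * (snocE K e * W) := mul_assoc _ _ _
      _ = 0 := by rw [hc, mul_zero]
  rw [← recoveryR (KE_le_span hw)]
  apply Finset.sum_eq_zero
  intro x _
  rw [← hWdef, hW]
  simp

lemma step_edge [Finite E.V] {z : E.PA K} (hz : z ∈ E.relCenter K) (e : E.Edge) :
    (∃ k : K, z * E.vtx K (E.s e) = k • E.vtx K (E.s e)) ↔
      (∃ k : K, z * E.vtx K (E.r e) = k • E.vtx K (E.r e)) := by
  have hcz_v : ∀ u : E.V, E.vtx K u * z = z * E.vtx K u :=
    fun u => hz.2 _ (vtx_mem_KE u)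
  have hcz_e : E.edg K e * z = z * E.edg K e := hz.2 _ (edg_mem_KE e)
  constructor
  · rintro ⟨k, hk⟩
    refine ⟨k, ?_⟩
    have hze : z * E.edg K e = k • E.edg K e := by
      calc z * E.edg K e = z * (E.vtx K (E.s e) * E.edg K e) := by rw [vtx_mul_edg_self]
        _ = (z * E.vtx K (E.s e)) * E.edg K e := by rw [mul_assoc]
        _ = (k • E.vtx K (E.s e)) * E.edg K e := by rw [hk]
        _ = k • (E.vtx K (E.s e) * E.edg K e) := smul_mul_assoc _ _ _
        _ = k • E.edg K e := by rw [vtx_mul_edg_self]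
    have hw : z * E.vtx K (E.r e) - k • E.vtx K (E.r e) ∈ E.KE K :=
      sub_mem (mul_mem hz.1 (vtx_mem_KE _))
        (SMulMemClass.smul_mem _ (vtx_mem_KE _))
    have h1 : E.vtx K (E.r e) * (z * E.vtx K (E.r e) - k • E.vtx K (E.r e)) =
        z * E.vtx K (E.r e) - k • E.vtx K (E.r e) := by
      rw [mul_sub, ← mul_assoc, hcz_v, mul_assoc, vtx_mul_vtx_self,
        mul_smul_comm, vtx_mul_vtx_self]
    have h2 : E.edg K e * (z * E.vtx K (E.r e) - k • E.vtx K (E.r e)) = 0 := by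
      rw [mul_sub, ← mul_assoc, hcz_e, mul_assoc, edg_mul_vtx_self,
        mul_smul_comm, edg_mul_vtx_self, hze, sub_self]
    have := cancel_left e hw h1 h2
    rwa [sub_eq_zero] at this
  · rintro ⟨k, hk⟩
    refine ⟨k, ?_⟩
    have hze : z * E.edg K e = k • E.edg K e := by
      calc z * E.edg K e = z * (E.edg K e * E.vtx K (E.r e)) := by rw [edg_mul_vtx_self]
        _ = (z * E.edg K e) * E.vtx K (E.r e) := by rw [mul_assoc]
        _ = (E.edg K e * z) * E.vtx K (E.r e) := by rw [hcz_e]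
        _ = E.edg K e * (z * E.vtx K (E.r e)) := mul_assoc _ _ _
        _ = E.edg K e * (k • E.vtx K (E.r e)) := by rw [hk]
        _ = k • (E.edg K e * E.vtx K (E.r e)) := mul_smul_comm _ _ _
        _ = k • E.edg K e := by rw [edg_mul_vtx_self]
    have hw : z * E.vtx K (E.s e) - k • E.vtx K (E.s e) ∈ E.KE K :=
      sub_mem (mul_mem hz.1 (vtx_mem_KE _))
        (SMulMemClass.smul_mem _ (vtx_mem_KE _))
    have h1 : (z * E.vtx K (E.s e) - k • E.vtx K (E.s e)) * E.vtx K (E.s e) =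
        z * E.vtx K (E.s e) - k • E.vtx K (E.s e) := by
      rw [sub_mul, mul_assoc, vtx_mul_vtx_self, smul_mul_assoc, vtx_mul_vtx_self]
    have h2 : (z * E.vtx K (E.s e) - k • E.vtx K (E.s e)) * E.edg K e = 0 := by
      rw [sub_mul, mul_assoc, vtx_mul_edg_self, smul_mul_assoc, vtx_mul_edg_self,
        hze, sub_self]
    have := cancel_right e hw h1 h2
    rwa [sub_eq_zero] at this

end DirGraph

end Stmt3Aux

/-- For `E` finite connected and `z ∈ Z(KE)` with Peirce components
`z_u = z·u`: if `u ∼ v` then `z_u ∈ Ku ↔ z_v ∈ Kv`; consequently either `z_u ∈ Ku`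
for all vertices `u`, or `z_u ∉ Ku` for all vertices `u`. -/
theorem stmt3 (K : Type) [Field K] (E : DirGraph) [Finite E.V]
    (hconn : E.IsConnectedGraph) (z : E.PA K) (hz : z ∈ E.relCenter K) :
    (∀ u v : E.V, E.Connected u v →
      ((∃ k : K, z * E.vtx K u = k • E.vtx K u) ↔
        (∃ k : K, z * E.vtx K v = k • E.vtx K v))) ∧
    ((∀ u : E.V, ∃ k : K, z * E.vtx K u = k • E.vtx K u) ∨
      (∀ u : E.V, ¬ ∃ k : K, z * E.vtx K u = k • E.vtx K u)) := by
  classical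
  have main : ∀ u v : E.V, E.Connected u v →
      ((∃ k : K, z * E.vtx K u = k • E.vtx K u) ↔
        (∃ k : K, z * E.vtx K v = k • E.vtx K v)) := by
    intro u v h
    induction h with
    | refl => exact Iff.rfl
    | tail hb hstep ih =>
      refine ih.trans ?_
      rcases hstep with ⟨e, hse, hre⟩ | ⟨e, hse, hre⟩
      · rw [← hse, ← hre]
        exact DirGraph.step_edge hz e
      · rw [← hse, ← hre]
        exact (DirGraph.step_edge hz e).symm
  refine ⟨main, ?_⟩
  rcases isEmpty_or_nonempty E.V with hE | hE
  · exact Or.inl fun u => (hE.false u).elim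
  · obtain ⟨u₀⟩ := hE
    by_cases h : ∃ k : K, z * E.vtx K u₀ = k • E.vtx K u₀
    · exact Or.inl fun u => (main u₀ u (hconn u₀ u)).mp h
    · exact Or.inr fun u hk => h ((main u u₀ (hconn u u₀)).mp hk)
end

section
/- Let E be a finite connected directed graph and K a field. If the center Z(KE) of the path algebra is nonzero and not contained in K·1, then the graph E has no sinks and no sources. -/
section Stmt6Aux

open DirGraph

attribute [local instance] Classical.propDecidable

variable (K : Type) [Field K] (E : DirGraph)

/-- Terminal vertex of a walk. -/
def trm : E.V → List E.Edge → E.V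
  | u, [] => u
  | _, e :: l => trm (E.r e) l

/-- The list of edges is a composable sequence starting at the given vertex. -/
def Good : E.V → List E.Edge → Prop
  | _, [] => True
  | u, e :: l => E.s e = u ∧ Good (E.r e) l

lemma trm_nil (u : E.V) : trm E u [] = u := rfl
lemma trm_cons (u : E.V) (e : E.Edge) (l : List E.Edge) :
    trm E u (e :: l) = trm E (E.r e) l := rfl

lemma trm_append (l l' : List E.Edge) : ∀ u, trm E u (l ++ l') = trm E (trm E u l) l' := by
  induction l with
  | nil => intro u; rfl
  | cons e l ih => intro u; exact ih _

lemma trm_concat (l : List E.Edge) (e : E.Edge) (u : E.V) :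
    trm E u (l ++ [e]) = E.r e := by rw [trm_append]; rfl

lemma good_nil (u : E.V) : Good E u [] := trivial

lemma good_cons {u : E.V} {e : E.Edge} {l : List E.Edge} :
    Good E u (e :: l) ↔ E.s e = u ∧ Good E (E.r e) l := Iff.rfl

lemma good_append {l l' : List E.Edge} : ∀ {u}, Good E u l → Good E (trm E u l) l' →
    Good E u (l ++ l') := by
  induction l with
  | nil => intro u _ h'; exact h'
  | cons e l ih => intro u h h'; exact ⟨h.1, ih h.2 h'⟩

lemma good_of_append_left {l l' : List E.Edge} : ∀ {u}, Good E u (l ++ l') → Good E u l := by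
  induction l with
  | nil => intro u _; trivial
  | cons e l ih => intro u h; exact ⟨h.1, ih h.2⟩

/- Relations in the path algebra. -/
lemma vtx_mul_vtx_self (u : E.V) : E.vtx K u * E.vtx K u = E.vtx K u := by
  simpa only [map_mul, DirGraph.vtx] using
    RingQuot.mkAlgHom_rel K (DirGraph.PathRel.vv_eq (K := K) (E := E) u)

lemma vtx_mul_vtx_ne {u v : E.V} (h : u ≠ v) : E.vtx K u * E.vtx K v = 0 := by
  simpa only [map_mul, map_zero, DirGraph.vtx] using
    RingQuot.mkAlgHom_rel K (DirGraph.PathRel.vv_ne (K := K) (E := E) u v h)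

lemma vtx_mul_edg_self (e : E.Edge) : E.vtx K (E.s e) * E.edg K e = E.edg K e := by
  simpa only [map_mul, DirGraph.vtx, DirGraph.edg] using
    RingQuot.mkAlgHom_rel K (DirGraph.PathRel.ve_eq (K := K) (E := E) e)

lemma vtx_mul_edg_ne {u : E.V} {e : E.Edge} (h : E.s e ≠ u) : E.vtx K u * E.edg K e = 0 := by
  simpa only [map_mul, map_zero, DirGraph.vtx, DirGraph.edg] using
    RingQuot.mkAlgHom_rel K (DirGraph.PathRel.ve_ne (K := K) (E := E) u e h)

lemma edg_mul_vtx_self (e : E.Edge) : E.edg K e * E.vtx K (E.r e) = E.edg K e := by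
  simpa only [map_mul, DirGraph.vtx, DirGraph.edg] using
    RingQuot.mkAlgHom_rel K (DirGraph.PathRel.ev_eq (K := K) (E := E) e)

lemma edg_mul_vtx_ne {u : E.V} {e : E.Edge} (h : E.r e ≠ u) : E.edg K e * E.vtx K u = 0 := by
  simpa only [map_mul, map_zero, DirGraph.vtx, DirGraph.edg] using
    RingQuot.mkAlgHom_rel K (DirGraph.PathRel.ev_ne (K := K) (E := E) e u h)

/- pathElem lemmas -/
lemma pathElem_nil (u : E.V) : E.pathElem K u [] = E.vtx K u := by
  simp [DirGraph.pathElem]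

lemma pathElem_cons {u : E.V} {e : E.Edge} (l : List E.Edge) (h : E.s e = u) :
    E.pathElem K u (e :: l) = E.edg K e * E.pathElem K (E.r e) l := by
  simp only [DirGraph.pathElem, List.map_cons, List.prod_cons]
  rw [← mul_assoc, ← h, vtx_mul_edg_self, ← mul_assoc, edg_mul_vtx_self]

lemma pathElem_cons_zero {u : E.V} {e : E.Edge} (l : List E.Edge) (h : E.s e ≠ u) :
    E.pathElem K u (e :: l) = 0 := by
  simp only [DirGraph.pathElem, List.map_cons, List.prod_cons]
  rw [← mul_assoc, vtx_mul_edg_ne K E h, zero_mul]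

lemma pathElem_edge (e : E.Edge) : E.pathElem K (E.s e) [e] = E.edg K e := by
  rw [pathElem_cons K E [] rfl, pathElem_nil, edg_mul_vtx_self]

lemma good_mul_eq {u u' : E.V} {l : List E.Edge} (l' : List E.Edge)
    (h : Good E u l) (h2 : trm E u l = u') :
    E.pathElem K u l * E.pathElem K u' l' = E.pathElem K u (l ++ l') := by
  induction l generalizing u with
  | nil =>
    rw [trm_nil] at h2
    subst h2
    rw [pathElem_nil, List.nil_append, DirGraph.pathElem, ← mul_assoc, vtx_mul_vtx_self]
  | cons e l ih =>
    rw [List.cons_append, pathElem_cons K E _ h.1, pathElem_cons K E _ h.1, mul_assoc,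
      ih h.2 h2]

lemma good_mul_ne {u u' : E.V} {l : List E.Edge} (l' : List E.Edge)
    (h : Good E u l) (h2 : trm E u l ≠ u') :
    E.pathElem K u l * E.pathElem K u' l' = 0 := by
  induction l generalizing u with
  | nil =>
    rw [trm_nil] at h2
    rw [pathElem_nil]
    simp only [DirGraph.pathElem, ← mul_assoc, vtx_mul_vtx_ne K E h2, zero_mul]
  | cons e l ih =>
    rw [pathElem_cons K E _ h.1, mul_assoc, ih h.2 h2, mul_zero]


/-- Index type for the model: pairs (vertex, list of edges). -/
abbrev Ix := E.V × List E.Edge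

/-- The model module: free module on `Ix`. -/
abbrev M0 := Ix E →₀ K

/-- Operator corresponding to a vertex. -/
noncomputable def Pv (u : E.V) : Module.End K (M0 K E) :=
  Finsupp.lsum K fun p => if p.1 = u then Finsupp.lsingle p else 0

/-- Operator corresponding to an edge (left concatenation). -/
noncomputable def Le (e : E.Edge) : Module.End K (M0 K E) :=
  Finsupp.lsum K fun p => if p.1 = E.r e then Finsupp.lsingle (E.s e, e :: p.2) else 0

lemma Pv_single (u : E.V) (p : Ix E) (k : K) :
    Pv K E u (Finsupp.single p k) = if p.1 = u then Finsupp.single p k else 0 := by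
  rw [Pv, Finsupp.lsum_single]
  split_ifs <;> simp

lemma Le_single (e : E.Edge) (p : Ix E) (k : K) :
    Le K E e (Finsupp.single p k) =
      if p.1 = E.r e then Finsupp.single (E.s e, e :: p.2) k else 0 := by
  rw [Le, Finsupp.lsum_single]
  split_ifs <;> simp

lemma Pv_mul_self (u : E.V) : Pv K E u * Pv K E u = Pv K E u := by
  refine Finsupp.lhom_ext fun p k => ?_
  simp only [Module.End.mul_apply, Pv_single]
  split_ifs with h <;> simp [Pv_single, h]

lemma Pv_mul_ne {u v : E.V} (h : u ≠ v) : Pv K E u * Pv K E v = 0 := by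
  refine Finsupp.lhom_ext fun p k => ?_
  simp only [Module.End.mul_apply, LinearMap.zero_apply, Pv_single]
  split_ifs with h1
  · simp only [Pv_single, h1, if_neg (fun hh : v = u => h hh.symm)]
  · simp

lemma Pv_mul_Le (e : E.Edge) : Pv K E (E.s e) * Le K E e = Le K E e := by
  refine Finsupp.lhom_ext fun p k => ?_
  simp only [Module.End.mul_apply, Le_single]
  split_ifs with h <;> simp [Pv_single]

lemma Pv_mul_Le_ne {u : E.V} {e : E.Edge} (h : E.s e ≠ u) : Pv K E u * Le K E e = 0 := by
  refine Finsupp.lhom_ext fun p k => ?_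
  simp only [Module.End.mul_apply, LinearMap.zero_apply, Le_single]
  split_ifs with h1 <;> simp [Pv_single, h]

lemma Le_mul_Pv (e : E.Edge) : Le K E e * Pv K E (E.r e) = Le K E e := by
  refine Finsupp.lhom_ext fun p k => ?_
  simp only [Module.End.mul_apply, Pv_single]
  split_ifs with h <;> simp [Le_single, h]

lemma Le_mul_Pv_ne {u : E.V} {e : E.Edge} (h : E.r e ≠ u) : Le K E e * Pv K E u = 0 := by
  refine Finsupp.lhom_ext fun p k => ?_
  simp only [Module.End.mul_apply, LinearMap.zero_apply, Pv_single]
  split_ifs with h1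
  · simp only [Le_single, h1, if_neg (fun hh : u = E.r e => h hh.symm)]
  · simp

/-- The representation of the path algebra on the model module. -/
noncomputable def phi : E.PA K →ₐ[K] Module.End K (M0 K E) :=
  RingQuot.liftAlgHom K ⟨FreeAlgebra.lift K (Sum.elim (Pv K E) (Le K E)), by
    rintro x y h
    induction h with
    | vv_eq u =>
      rw [map_mul]
      simp only [FreeAlgebra.lift_ι_apply, Sum.elim_inl]
      exact Pv_mul_self K E u
    | vv_ne u v h =>
      rw [map_mul, map_zero]
      simp only [FreeAlgebra.lift_ι_apply, Sum.elim_inl]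
      exact Pv_mul_ne K E h
    | ve_eq e =>
      rw [map_mul]
      simp only [FreeAlgebra.lift_ι_apply, Sum.elim_inl, Sum.elim_inr]
      exact Pv_mul_Le K E e
    | ve_ne u e h =>
      rw [map_mul, map_zero]
      simp only [FreeAlgebra.lift_ι_apply, Sum.elim_inl, Sum.elim_inr]
      exact Pv_mul_Le_ne K E h
    | ev_eq e =>
      rw [map_mul]
      simp only [FreeAlgebra.lift_ι_apply, Sum.elim_inl, Sum.elim_inr]
      exact Le_mul_Pv K E e
    | ev_ne e u h =>
      rw [map_mul, map_zero]
      simp only [FreeAlgebra.lift_ι_apply, Sum.elim_inl, Sum.elim_inr]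
      exact Le_mul_Pv_ne K E h⟩

lemma phi_vtx (u : E.V) : phi K E (E.vtx K u) = Pv K E u := by
  rw [DirGraph.vtx, phi, RingQuot.liftAlgHom_mkAlgHom_apply]
  simp [FreeAlgebra.lift_ι_apply]

lemma phi_edg (e : E.Edge) : phi K E (E.edg K e) = Le K E e := by
  rw [DirGraph.edg, phi, RingQuot.liftAlgHom_mkAlgHom_apply]
  simp [FreeAlgebra.lift_ι_apply]
lemma Pv_apply (u : E.V) (m : M0 K E) (p : Ix E) :
    Pv K E u m p = if p.1 = u then m p else 0 := by
  induction m using Finsupp.induction_linear with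
  | zero => simp
  | add f g hf hg =>
    rw [map_add, Finsupp.add_apply, hf, hg, Finsupp.add_apply]
    split_ifs <;> simp
  | single q k =>
    rw [Pv_single]
    by_cases hqp : q = p
    · subst hqp; split_ifs <;> simp
    · split_ifs <;> simp [Finsupp.single_eq_of_ne' hqp]

lemma Le_apply_nil (e : E.Edge) (m : M0 K E) (u : E.V) :
    Le K E e m ((u, ([] : List E.Edge)) : Ix E) = 0 := by
  induction m using Finsupp.induction_linear with
  | zero => simp
  | add f g hf hg => rw [map_add, Finsupp.add_apply, hf, hg]; simp
  | single q k =>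
    rw [Le_single]
    split_ifs
    · exact Finsupp.single_eq_of_ne' (by simp)
    · simp

lemma Le_apply_cons (e : E.Edge) (m : M0 K E) (u : E.V) (e' : E.Edge) (t : List E.Edge) :
    Le K E e m ((u, e' :: t) : Ix E) = if u = E.s e ∧ e' = e then m (E.r e, t) else 0 := by
  induction m using Finsupp.induction_linear with
  | zero => simp
  | add f g hf hg =>
    rw [map_add, Finsupp.add_apply, hf, hg, Finsupp.add_apply]
    split_ifs <;> simp
  | single q k =>
    rw [Le_single]
    by_cases h1 : q.1 = E.r e
    · rw [if_pos h1]
      by_cases h2 : u = E.s e ∧ e' = e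
      · obtain ⟨h2a, h2b⟩ := h2
        rw [if_pos ⟨h2a, h2b⟩, Finsupp.single_apply, Finsupp.single_apply]
        have hiff : ((E.s e, e :: q.2) : Ix E) = ((u, e' :: t) : Ix E) ↔ q = (E.r e, t) := by
          subst h2a h2b
          rw [Prod.mk.injEq, List.cons.injEq]
          constructor
          · rintro ⟨-, -, h4⟩; exact Prod.ext h1 h4
          · rintro rfl; exact ⟨rfl, rfl, rfl⟩
        by_cases h5 : q = (E.r e, t)
        · rw [if_pos (hiff.mpr h5), if_pos h5]
        · rw [if_neg (fun hc => h5 (hiff.mp hc)), if_neg h5]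
      · rw [if_neg h2]
        refine Finsupp.single_eq_of_ne' fun hq => h2 ?_
        simp only [Prod.mk.injEq, List.cons.injEq] at hq
        exact ⟨hq.1.symm, hq.2.1.symm⟩
    · rw [if_neg h1, Finsupp.zero_apply]
      by_cases h2 : u = E.s e ∧ e' = e
      · rw [if_pos h2]
        exact (Finsupp.single_eq_of_ne' fun hq => h1 (by rw [hq])).symm
      · rw [if_neg h2]

lemma phi_pathElem (u : E.V) (l : List E.Edge) (w : E.V) (m : List E.Edge) :
    phi K E (E.pathElem K u l) (Finsupp.single ((w, m) : Ix E) (1:K)) =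
      if Good E u l ∧ trm E u l = w then Finsupp.single ((u, l ++ m) : Ix E) (1:K) else 0 := by
  induction l generalizing u with
  | nil =>
    rw [pathElem_nil, phi_vtx, Pv_single]
    by_cases h : w = u
    · subst h; rw [if_pos rfl, if_pos ⟨good_nil E w, rfl⟩, List.nil_append]
    · rw [if_neg h, if_neg (by rintro ⟨-, h2⟩; exact h h2.symm)]
  | cons e l ih =>
    by_cases hs : E.s e = u
    · subst hs
      rw [pathElem_cons K E _ rfl, map_mul, Module.End.mul_apply, phi_edg, ih]
      by_cases hg : Good E (E.r e) l ∧ trm E (E.r e) l = w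
      · rw [if_pos hg, Le_single, if_pos rfl, if_pos ⟨⟨rfl, hg.1⟩, hg.2⟩, List.cons_append]
      · rw [if_neg hg, map_zero, if_neg (by rintro ⟨⟨-, hg1⟩, hg2⟩; exact hg ⟨hg1, hg2⟩)]
    · rw [pathElem_cons_zero K E _ hs, map_zero, LinearMap.zero_apply,
        if_neg (by rintro ⟨⟨hg1, -⟩, -⟩; exact hs hg1)]

/-- The coefficient of a path in an element of the path algebra. -/
noncomputable def coeffL (p : Ix E) : E.PA K →ₗ[K] K :=
  (Finsupp.lapply p).comp
    ((LinearMap.applyₗ (Finsupp.single ((trm E p.1 p.2, ([] : List E.Edge)) : Ix E) (1:K))).comp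
      (phi K E).toLinearMap)

lemma coeffL_apply (p : Ix E) (x : E.PA K) :
    coeffL K E p x
      = phi K E x (Finsupp.single ((trm E p.1 p.2, ([] : List E.Edge)) : Ix E) 1) p := rfl

lemma coeffL_pathElem {u' : E.V} {l' : List E.Edge} (h' : Good E u' l') (p : Ix E) :
    coeffL K E p (E.pathElem K u' l') = if ((u', l') : Ix E) = p then 1 else 0 := by
  rw [coeffL_apply, phi_pathElem]
  by_cases hp : ((u', l') : Ix E) = p
  · subst hp
    rw [if_pos rfl, if_pos ⟨h', rfl⟩, List.append_nil, Finsupp.single_eq_same]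
  · rw [if_neg hp]
    split_ifs with h1
    · rw [List.append_nil]; exact Finsupp.single_eq_of_ne' hp
    · simp

/-- The set of (good) path elements. -/
def pSet : Set (E.PA K) := {x | ∃ u l, Good E u l ∧ x = E.pathElem K u l}

/-- The span of the path elements. -/
noncomputable def pSpan : Submodule K (E.PA K) := Submodule.span K (pSet K E)

lemma pathElem_mem {u : E.V} {l : List E.Edge} (h : Good E u l) :
    E.pathElem K u l ∈ pSpan K E :=
  Submodule.subset_span ⟨u, l, h, rfl⟩

lemma mul_pathElem_mem {x : E.PA K} (hx : x ∈ pSpan K E) {u' : E.V} {l' : List E.Edge}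
    (h' : Good E u' l') : x * E.pathElem K u' l' ∈ pSpan K E := by
  induction hx using Submodule.span_induction with
  | mem y hy =>
    obtain ⟨u, l, hg, rfl⟩ := hy
    by_cases h2 : trm E u l = u'
    · rw [good_mul_eq K E l' hg h2]
      exact pathElem_mem K E (good_append E hg (h2 ▸ h'))
    · rw [good_mul_ne K E l' hg h2]; exact zero_mem _
  | zero => rw [zero_mul]; exact zero_mem _
  | add a b ha hb iha ihb => rw [add_mul]; exact add_mem iha ihb
  | smul r a ha iha => rw [smul_mul_assoc]; exact Submodule.smul_mem _ _ iha

lemma mul_mem_pSpan {x y : E.PA K} (hx : x ∈ pSpan K E) (hy : y ∈ pSpan K E) :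
    x * y ∈ pSpan K E := by
  induction hy using Submodule.span_induction with
  | mem y hy =>
    obtain ⟨u, l, hg, rfl⟩ := hy
    exact mul_pathElem_mem K E hx hg
  | zero => rw [mul_zero]; exact zero_mem _
  | add a b ha hb iha ihb => rw [mul_add]; exact add_mem iha ihb
  | smul r a ha iha => rw [mul_smul_comm]; exact Submodule.smul_mem _ _ iha

lemma KE_subset_pSpan {x : E.PA K} (hx : x ∈ E.KE K) : x ∈ pSpan K E := by
  have hx' : x ∈ NonUnitalAlgebra.adjoin K (Set.range (E.vtx K) ∪ Set.range (E.edg K)) := hx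
  clear hx
  induction hx' using NonUnitalAlgebra.adjoin_induction with
  | mem y hy =>
    rcases hy with ⟨u, rfl⟩ | ⟨e, rfl⟩
    · rw [← pathElem_nil]; exact pathElem_mem K E (good_nil E u)
    · rw [← pathElem_edge]; exact pathElem_mem K E ⟨rfl, trivial⟩
  | add a b ha hb iha ihb => exact add_mem iha ihb
  | zero => exact zero_mem _
  | mul a b ha hb iha ihb => exact mul_mem_pSpan K E iha ihb
  | smul r a ha iha => exact Submodule.smul_mem _ _ iha

lemma phi_append {z : E.PA K} (hz : z ∈ pSpan K E) (u : E.V) (l m : List E.Edge) (w : E.V) :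
    phi K E z (Finsupp.single ((w, m) : Ix E) 1) ((u, l ++ m) : Ix E) =
      if trm E u l = w then coeffL K E (u, l) z else 0 := by
  induction hz using Submodule.span_induction with
  | mem y hy =>
    obtain ⟨u', l', hg, rfl⟩ := hy
    rw [phi_pathElem, coeffL_pathElem K E hg]
    by_cases h1 : ((u', l') : Ix E) = ((u, l) : Ix E)
    · rw [Prod.mk.injEq] at h1
      obtain ⟨rfl, rfl⟩ := h1
      by_cases h2 : trm E u' l' = w
      · rw [if_pos ⟨hg, h2⟩, if_pos h2, if_pos rfl, Finsupp.single_eq_same]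
      · rw [if_neg (fun hc => h2 hc.2), if_neg h2, Finsupp.zero_apply]
    · trans (0:K)
      · split_ifs with h2
        · refine Finsupp.single_eq_of_ne' fun hc => h1 ?_
          rw [Prod.mk.injEq] at hc ⊢
          exact ⟨hc.1, List.append_cancel_right hc.2⟩
        · simp
      · rw [if_neg h1]
        split_ifs <;> rfl
  | zero => simp
  | add a b ha hb iha ihb =>
    rw [map_add, LinearMap.add_apply, Finsupp.add_apply, iha, ihb, map_add]
    split_ifs <;> simp
  | smul r a ha iha =>
    rw [map_smul, LinearMap.smul_apply, Finsupp.smul_apply, iha, map_smul]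
    split_ifs <;> simp

lemma phi_not_suffix {z : E.PA K} (hz : z ∈ pSpan K E) (u w : E.V) (m l0 : List E.Edge)
    (h : ∀ l : List E.Edge, l0 ≠ l ++ m) :
    phi K E z (Finsupp.single ((w, m) : Ix E) 1) ((u, l0) : Ix E) = 0 := by
  induction hz using Submodule.span_induction with
  | mem y hy =>
    obtain ⟨u', l', hg, rfl⟩ := hy
    rw [phi_pathElem]
    split_ifs with h1
    · exact Finsupp.single_eq_of_ne' fun hc => h l' (by rw [Prod.mk.injEq] at hc; exact hc.2.symm)
    · simp
  | zero => simp
  | add a b ha hb iha ihb => rw [map_add, LinearMap.add_apply, Finsupp.add_apply, iha, ihb, add_zero]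
  | smul r a ha iha => rw [map_smul, LinearMap.smul_apply, Finsupp.smul_apply, iha, smul_zero]

lemma coeffL_of_not_good {z : E.PA K} (hz : z ∈ pSpan K E) {u : E.V} {l : List E.Edge}
    (h : ¬ Good E u l) : coeffL K E ((u, l) : Ix E) z = 0 := by
  induction hz using Submodule.span_induction with
  | mem y hy =>
    obtain ⟨u', l', hg, rfl⟩ := hy
    rw [coeffL_pathElem K E hg, if_neg]
    intro hc
    rw [Prod.mk.injEq] at hc
    obtain ⟨rfl, rfl⟩ := hc
    exact h hg
  | zero => simp
  | add a b ha hb iha ihb => rw [map_add, iha, ihb, add_zero]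
  | smul r a ha iha => rw [map_smul, iha, smul_zero]
lemma pSet_eq_range : pSet K E =
    Set.range (fun g : {q : Ix E // Good E q.1 q.2} => E.pathElem K g.1.1 g.1.2) := by
  ext x
  constructor
  · rintro ⟨u, l, h, rfl⟩; exact ⟨⟨(u, l), h⟩, rfl⟩
  · rintro ⟨⟨⟨u, l⟩, h⟩, rfl⟩; exact ⟨u, l, h, rfl⟩

lemma eq_zero_of_coeffL {x : E.PA K} (hx : x ∈ pSpan K E)
    (h : ∀ p : Ix E, coeffL K E p x = 0) : x = 0 := by
  rw [pSpan, pSet_eq_range, Finsupp.mem_span_range_iff_exists_finsupp] at hx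
  obtain ⟨c, rfl⟩ := hx
  have hc : ∀ g, c g = 0 := by
    intro g
    have h0 := h g.1
    rw [map_finsuppSum] at h0
    have h2 : (c.sum fun i a => coeffL K E g.1 (a • E.pathElem K i.1.1 i.1.2))
        = c.sum fun i a => if i = g then a else 0 := by
      refine Finsupp.sum_congr fun i _ => ?_
      rw [map_smul, coeffL_pathElem K E i.2]
      by_cases hig : i = g
      · subst hig
        rw [if_pos rfl, if_pos rfl, smul_eq_mul, mul_one]
      · rw [if_neg hig, if_neg (fun hc => hig (Subtype.ext hc)), smul_zero]
    have h3 : (c.sum fun i a => if i = g then a else 0) = c g := by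
      rw [Finsupp.sum]
      rw [Finset.sum_ite_eq' c.support g (fun i => c i)]
      · split_ifs with hmem
        · rfl
        · exact (Finsupp.notMem_support_iff.mp hmem).symm
    exact h3.symm.trans (h2.symm.trans h0)
  have hc0 : c = 0 := Finsupp.ext hc
  rw [hc0, Finsupp.sum_zero_index]

lemma unitKE_eq [Fintype E.V] : E.unitKE K = ∑ u, E.vtx K u := finsum_eq_sum_of_fintype _

lemma unitKE_mem_pSpan [Fintype E.V] : E.unitKE K ∈ pSpan K E := by
  rw [unitKE_eq]
  exact Submodule.sum_mem _ fun u _ => by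
    rw [← pathElem_nil]; exact pathElem_mem K E (good_nil E u)

lemma coeffL_unitKE [Fintype E.V] (u : E.V) (l : List E.Edge) :
    coeffL K E ((u, l) : Ix E) (E.unitKE K) = if l = [] then 1 else 0 := by
  rw [unitKE_eq, map_sum]
  have hterm : ∀ u' ∈ Finset.univ, coeffL K E ((u, l) : Ix E) (E.vtx K u')
      = if u' = u ∧ l = [] then (1:K) else 0 := by
    intro u' _
    rw [← pathElem_nil, coeffL_pathElem K E (good_nil E u')]
    by_cases hc : ((u', ([] : List E.Edge)) : Ix E) = ((u, l) : Ix E)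
    · rw [if_pos hc]
      rw [Prod.mk.injEq] at hc
      rw [if_pos ⟨hc.1, hc.2.symm⟩]
    · rw [if_neg hc, if_neg (fun hh => hc (by rw [Prod.mk.injEq]; exact ⟨hh.1, hh.2.symm⟩))]
  rw [Finset.sum_congr rfl hterm]
  by_cases hl : l = []
  · subst hl
    simp
  · simp [hl]

lemma vtx_mem_KE (u : E.V) : E.vtx K u ∈ E.KE K :=
  NonUnitalAlgebra.subset_adjoin K (Set.mem_union_left _ ⟨u, rfl⟩)

lemma edg_mem_KE (e : E.Edge) : E.edg K e ∈ E.KE K :=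
  NonUnitalAlgebra.subset_adjoin K (Set.mem_union_right _ ⟨e, rfl⟩)

lemma coeffL_apply' (u : E.V) (l : List E.Edge) (x : E.PA K) :
    coeffL K E ((u, l) : Ix E) x
      = phi K E x (Finsupp.single ((trm E u l, ([] : List E.Edge)) : Ix E) 1) (u, l) := rfl

lemma coeffL_of_not_closed {z : E.PA K} (hzs : z ∈ pSpan K E)
    (hcom : ∀ a ∈ E.KE K, a * z = z * a) (u : E.V) (l : List E.Edge)
    (h : ¬ trm E u l = u) : coeffL K E ((u, l) : Ix E) z = 0 := by
  have heq := hcom (E.vtx K u) (vtx_mem_KE K E u)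
  have h1 : coeffL K E ((u, l) : Ix E) (E.vtx K u * z) = coeffL K E ((u, l) : Ix E) z := by
    rw [coeffL_apply', map_mul, Module.End.mul_apply, phi_vtx, Pv_apply, if_pos rfl]
    exact (coeffL_apply' K E u l z).symm
  have h2 : coeffL K E ((u, l) : Ix E) (z * E.vtx K u) = 0 := by
    rw [coeffL_apply', map_mul, Module.End.mul_apply, phi_vtx, Pv_single, if_neg h, map_zero]
    simp
  rw [← h1, heq, h2]

lemma coeffL_mul_edg {z : E.PA K} (hzs : z ∈ pSpan K E) (u : E.V) (l : List E.Edge)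
    (e : E.Edge) :
    coeffL K E ((u, l ++ [e]) : Ix E) (z * E.edg K e)
      = if trm E u l = E.s e then coeffL K E ((u, l) : Ix E) z else 0 := by
  rw [coeffL_apply', trm_concat, map_mul, Module.End.mul_apply, phi_edg, Le_single, if_pos rfl]
  exact phi_append K E hzs u l [e] (E.s e)

lemma coeffL_edg_mul_nil {z : E.PA K} (u : E.V) (e : E.Edge) :
    coeffL K E ((u, [e]) : Ix E) (E.edg K e * z)
      = if u = E.s e then coeffL K E ((E.r e, ([] : List E.Edge)) : Ix E) z else 0 := by
  rw [coeffL_apply', map_mul, Module.End.mul_apply, phi_edg, Le_apply_cons]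
  by_cases hu : u = E.s e
  · rw [if_pos ⟨hu, rfl⟩, if_pos hu, coeffL_apply']
    rfl
  · rw [if_neg (fun hcc => hu hcc.1), if_neg hu]

lemma coeffL_edg_mul_cons {z : E.PA K} (u : E.V) (e e' : E.Edge) (t : List E.Edge) :
    coeffL K E ((u, e' :: t) : Ix E) (E.edg K e * z)
      = if u = E.s e ∧ e' = e then coeffL K E ((E.r e, t) : Ix E) z else 0 := by
  rw [coeffL_apply', map_mul, Module.End.mul_apply, phi_edg, Le_apply_cons]
  by_cases h : u = E.s e ∧ e' = e
  · obtain ⟨hu, rfl⟩ := h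
    rw [if_pos ⟨hu, rfl⟩, if_pos ⟨hu, rfl⟩, coeffL_apply']
    rfl
  · rw [if_neg h, if_neg h]

lemma coeff_nil_eq {z : E.PA K} (hzs : z ∈ pSpan K E)
    (hcom : ∀ a ∈ E.KE K, a * z = z * a) (e : E.Edge) :
    coeffL K E ((E.s e, ([] : List E.Edge)) : Ix E) z
      = coeffL K E ((E.r e, ([] : List E.Edge)) : Ix E) z := by
  have heq := hcom (E.edg K e) (edg_mem_KE K E e)
  have h1 := coeffL_edg_mul_nil K E (z := z) (E.s e) e
  have h2 := coeffL_mul_edg K E hzs (E.s e) [] e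
  rw [List.nil_append] at h2
  rw [heq, h2, if_pos (trm_nil E (E.s e)), if_pos rfl] at h1
  exact h1

lemma coeff_rotate {z : E.PA K} (hzs : z ∈ pSpan K E)
    (hcom : ∀ a ∈ E.KE K, a * z = z * a) (e : E.Edge) (t : List E.Edge)
    (hclosed : trm E (E.s e) (e :: t) = E.s e) :
    coeffL K E ((E.s e, e :: t) : Ix E) z = coeffL K E ((E.r e, t ++ [e]) : Ix E) z := by
  have heq := hcom (E.edg K e) (edg_mem_KE K E e)
  have h1 := coeffL_edg_mul_cons K E (z := z) (E.s e) e e (t ++ [e])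
  have h2 := coeffL_mul_edg K E hzs (E.s e) (e :: t) e
  rw [heq, if_pos ⟨rfl, rfl⟩] at h1
  rw [List.cons_append, if_pos hclosed] at h2
  exact h2.symm.trans h1

lemma coeff_kill {z : E.PA K} (hzs : z ∈ pSpan K E)
    (hcom : ∀ a ∈ E.KE K, a * z = z * a) (e e' : E.Edge) (t : List E.Edge) (hne : e' ≠ e)
    (hclosed : trm E (E.s e) (e' :: t) = E.s e) :
    coeffL K E ((E.s e, e' :: t) : Ix E) z = 0 := by
  have heq := hcom (E.edg K e) (edg_mem_KE K E e)
  have h1 := coeffL_edg_mul_cons K E (z := z) (E.s e) e e' (t ++ [e])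
  have h2 := coeffL_mul_edg K E hzs (E.s e) (e' :: t) e
  rw [heq, if_neg (fun hcc => hne hcc.2)] at h1
  rw [List.cons_append, if_pos hclosed] at h2
  exact h2.symm.trans h1

lemma coeff_shift {z : E.PA K} (hzs : z ∈ pSpan K E)
    (hcom : ∀ a ∈ E.KE K, a * z = z * a) (e : E.Edge) (l2 : List E.Edge)
    (hclosed : trm E (E.r e) l2 = E.r e) :
    coeffL K E ((E.r e, l2) : Ix E) z
      = phi K E z (Finsupp.single ((E.s e, [e]) : Ix E) 1) ((E.s e, e :: l2) : Ix E) := by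
  have heq := hcom (E.edg K e) (edg_mem_KE K E e)
  have h1 := coeffL_edg_mul_cons K E (z := z) (E.s e) e e l2
  rw [heq, if_pos ⟨rfl, rfl⟩] at h1
  have h2 : coeffL K E ((E.s e, e :: l2) : Ix E) (z * E.edg K e)
      = phi K E z (Finsupp.single ((E.s e, [e]) : Ix E) 1) ((E.s e, e :: l2) : Ix E) := by
    rw [coeffL_apply', map_mul, Module.End.mul_apply, phi_edg]
    have hb : trm E (E.s e) (e :: l2) = E.r e := hclosed
    rw [hb, Le_single, if_pos rfl]
  exact h1.symm.trans h2

lemma coeff_shift_eq {z : E.PA K} (hzs : z ∈ pSpan K E)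
    (hcom : ∀ a ∈ E.KE K, a * z = z * a) (e : E.Edge) (t : List E.Edge)
    (hclosed : trm E (E.r e) (t ++ [e]) = E.r e) :
    coeffL K E ((E.r e, t ++ [e]) : Ix E) z
      = if trm E (E.s e) (e :: t) = E.s e
          then coeffL K E ((E.s e, e :: t) : Ix E) z else 0 := by
  rw [coeff_shift K E hzs hcom e (t ++ [e]) hclosed, ← List.cons_append]
  exact phi_append K E hzs (E.s e) (e :: t) [e] (E.s e)

lemma coeff_shift_ne {z : E.PA K} (hzs : z ∈ pSpan K E)
    (hcom : ∀ a ∈ E.KE K, a * z = z * a) (e e2 : E.Edge) (t : List E.Edge) (hne : e2 ≠ e)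
    (hclosed : trm E (E.r e) (t ++ [e2]) = E.r e) :
    coeffL K E ((E.r e, t ++ [e2]) : Ix E) z = 0 := by
  rw [coeff_shift K E hzs hcom e (t ++ [e2]) hclosed]
  refine phi_not_suffix K E hzs (E.s e) (E.s e) [e] (e :: (t ++ [e2])) ?_
  intro l hl
  have h1 : (e :: (t ++ [e2])).getLast? = some e2 := by
    rw [← List.cons_append, List.getLast?_concat]
  rw [hl, List.getLast?_concat] at h1
  exact hne (Option.some.inj h1).symm

/-- Vanishing of all closed-path coefficients at a vertex. -/
def Vanish (z : E.PA K) (v : E.V) : Prop :=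
  ∀ l : List E.Edge, l ≠ [] → trm E v l = v → coeffL K E ((v, l) : Ix E) z = 0

lemma vanish_src {z : E.PA K} (hzs : z ∈ pSpan K E)
    (hcom : ∀ a ∈ E.KE K, a * z = z * a) (e : E.Edge) (h : Vanish K E z (E.r e)) :
    Vanish K E z (E.s e) := by
  intro l hl hc
  cases l with
  | nil => exact absurd rfl hl
  | cons e' t =>
    by_cases hee : e' = e
    · subst hee
      rw [coeff_rotate K E hzs hcom e' t hc]
      exact h (t ++ [e']) (by simp) (trm_concat E t e' (E.r e'))
    · exact coeff_kill K E hzs hcom e e' t hee hc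

lemma vanish_rng {z : E.PA K} (hzs : z ∈ pSpan K E)
    (hcom : ∀ a ∈ E.KE K, a * z = z * a) (e : E.Edge) (h : Vanish K E z (E.s e)) :
    Vanish K E z (E.r e) := by
  intro l hl hc
  rcases List.eq_nil_or_concat l with rfl | ⟨t, e2, rfl⟩
  · exact absurd rfl hl
  · rw [List.concat_eq_append] at hc ⊢
    by_cases hee : e2 = e
    · subst hee
      rw [coeff_shift_eq K E hzs hcom e2 t hc]
      split_ifs with h2
      · exact h (e2 :: t) (by simp) h2
      · rfl
    · exact coeff_shift_ne K E hzs hcom e e2 t hee hc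

lemma vanish_step {z : E.PA K} (hzs : z ∈ pSpan K E)
    (hcom : ∀ a ∈ E.KE K, a * z = z * a) {u v : E.V} (h : E.Step u v)
    (hu : Vanish K E z u) : Vanish K E z v := by
  rcases h with ⟨e, rfl, rfl⟩ | ⟨e, rfl, rfl⟩
  · exact vanish_rng K E hzs hcom e hu
  · exact vanish_src K E hzs hcom e hu

lemma vanish_conn {z : E.PA K} (hzs : z ∈ pSpan K E)
    (hcom : ∀ a ∈ E.KE K, a * z = z * a) {u v : E.V} (h : E.Connected u v)
    (hu : Vanish K E z u) : Vanish K E z v := by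
  induction h with
  | refl => exact hu
  | tail hs hstep ih => exact vanish_step K E hzs hcom hstep ih

lemma coeff_nil_conn {z : E.PA K} (hzs : z ∈ pSpan K E)
    (hcom : ∀ a ∈ E.KE K, a * z = z * a) {u v : E.V} (h : E.Connected u v) :
    coeffL K E ((u, ([] : List E.Edge)) : Ix E) z
      = coeffL K E ((v, ([] : List E.Edge)) : Ix E) z := by
  induction h with
  | refl => rfl
  | tail hs hstep ih =>
    refine ih.trans ?_
    rcases hstep with ⟨e, rfl, rfl⟩ | ⟨e, rfl, rfl⟩
    · exact coeff_nil_eq K E hzs hcom e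
    · exact (coeff_nil_eq K E hzs hcom e).symm

lemma central_sub_scalar [Finite E.V] (hconn : E.IsConnectedGraph) (v0 : E.V)
    (hv0 : (∀ e : E.Edge, E.s e ≠ v0) ∨ (∀ e : E.Edge, E.r e ≠ v0)) :
    E.relCenter K ⊆ E.scalarSet K := by
  haveI := Fintype.ofFinite E.V
  rintro z ⟨hzKE, hcom⟩
  have hzs : z ∈ pSpan K E := KE_subset_pSpan K E hzKE
  have hv : Vanish K E z v0 := by
    rcases hv0 with hs | hr
    · intro l hl hc
      cases l with
      | nil => exact absurd rfl hl
      | cons e t =>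
        refine coeffL_of_not_good K E hzs ?_
        rintro ⟨hge, -⟩
        exact hs e hge
    · intro l hl hc
      rcases List.eq_nil_or_concat l with rfl | ⟨t, e2, rfl⟩
      · exact absurd rfl hl
      · rw [List.concat_eq_append, trm_concat] at hc
        exact absurd hc (hr e2)
  have hvan : ∀ u, Vanish K E z u := fun u => vanish_conn K E hzs hcom (hconn v0 u) hv
  have hnil : ∀ u, coeffL K E ((u, ([] : List E.Edge)) : Ix E) z
      = coeffL K E ((v0, ([] : List E.Edge)) : Ix E) z :=
    fun u => (coeff_nil_conn K E hzs hcom (hconn v0 u)).symm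
  refine ⟨coeffL K E ((v0, ([] : List E.Edge)) : Ix E) z, ?_⟩
  have hzero : z - coeffL K E ((v0, ([] : List E.Edge)) : Ix E) z • E.unitKE K = 0 := by
    refine eq_zero_of_coeffL K E
      (Submodule.sub_mem _ hzs (Submodule.smul_mem _ _ (unitKE_mem_pSpan K E))) ?_
    rintro ⟨u, l⟩
    rw [map_sub, map_smul, coeffL_unitKE]
    cases l with
    | nil => rw [if_pos rfl, smul_eq_mul, mul_one, hnil u, sub_self]
    | cons e t =>
      rw [if_neg (by simp), smul_zero, sub_zero]
      by_cases hc : trm E u (e :: t) = u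
      · exact hvan u (e :: t) (by simp) hc
      · exact coeffL_of_not_closed K E hzs hcom u (e :: t) hc
  exact (sub_eq_zero.mp hzero).symm

end Stmt6Aux

/-- If `E` is finite connected and `0 ≠ Z(KE) ⊄ K·1`, then `E` has
no sinks and no sources. -/
theorem stmt6 (K : Type) [Field K] (E : DirGraph) [Finite E.V]
    (hconn : E.IsConnectedGraph)
    (hne : ∃ z ∈ E.relCenter K, z ≠ 0)
    (hns : ¬ E.relCenter K ⊆ E.scalarSet K) :
    (∀ v : E.V, ∃ e : E.Edge, E.s e = v) ∧ (∀ v : E.V, ∃ e : E.Edge, E.r e = v) := by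
  constructor
  · intro v
    by_contra h
    push_neg at h
    exact hns (central_sub_scalar K E hconn v (Or.inl h))
  · intro v
    by_contra h
    push_neg at h
    exact hns (central_sub_scalar K E hconn v (Or.inr h))
end
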